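/- arXiv:1411.7681 — 4 statements merged into one kernel-verified Lean document; each statement's English description precedes it below -/
import Mathlib

section
/- With hypotheses as above, the map y ↦ κ_y satisfies κ_{x □ y} = κ_y ∘ κ_x for all x, y ∈ V. Consequently the set κ_V = {κ_x : x ∈ V} is a group (a homomorphic image of (V, □)), hence a p-group, and therefore acts unipotently on (V, ∘). -/
/-- With `(V, ∘)` a finite `F_p`-vector space (written additively), `□` an
abelian group operation on `V` with neutral element `0`, and `κ y ∈ GL(V, ∘)` satisfying
`x □ y = κ_y(x) ∘ y`, the map `y ↦ κ_y` satisfies `κ_{x □ y} = κ_y ∘ κ_x`.  Consequently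
`κ_V = {κ_x : x ∈ V}` is a group (a subgroup of `GL(V, ∘)`), it is a `p`-group (every
element has `p`-power order), and it acts unipotently on `(V, ∘)`. -/
theorem kappa_hom_pGroup_unipotent
    (p : ℕ) [Fact p.Prime]
    (V : Type*) [AddCommGroup V] [Module (ZMod p) V] [Finite V]
    (box : V → V → V)
    (hcomm : ∀ x y : V, box x y = box y x)
    (hassoc : ∀ x y z : V, box (box x y) z = box x (box y z))
    (hzero : ∀ x : V, box x 0 = x)
    (κ : V → V ≃ₗ[ZMod p] V)
    (hκ : ∀ x y : V, box x y = κ y x + y) :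
    -- the composition law
    (∀ x y : V, κ (box x y) = κ y * κ x) ∧
    -- `κ_V` is a subgroup of `GL(V, ∘)`
    (∃ H : Subgroup (V ≃ₗ[ZMod p] V), (H : Set (V ≃ₗ[ZMod p] V)) = Set.range κ) ∧
    -- `κ_V` is a `p`-group
    (∀ x : V, ∃ n : ℕ, (κ x) ^ (p ^ n) = 1) ∧
    -- `κ_V` acts unipotently on `(V, ∘)`
    (∀ x : V, IsNilpotent ((κ x : V →ₗ[ZMod p] V) - LinearMap.id)) := by
  -- κ 0 = 1
  have hκ0 : κ (0 : V) = 1 := by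
    apply LinearEquiv.ext
    intro x
    have h := hzero x
    rw [hκ] at h
    simpa using h
  -- the composition law
  have hmul : ∀ x y : V, κ (box x y) = κ y * κ x := by
    intro x y
    apply LinearEquiv.ext
    intro a
    have h1 : box a (box x y) = box (box a x) y := (hassoc a x y).symm
    rw [hκ a (box x y), hκ (box a x) y, hκ a x, map_add] at h1
    have h2 : κ (box x y) a + box x y = κ y (κ x a) + box x y := by
      rw [h1, hκ x y]; abel
    exact add_right_cancel h2
  -- the commutative monoid structure (V, □)
  letI : CommMonoid V :=
    { mul := box
      one := 0
      mul_assoc := hassoc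
      mul_comm := hcomm
      one_mul := fun x => by show box 0 x = x; rw [hcomm]; exact hzero x
      mul_one := hzero }
  have hboxmul : ∀ x y : V, x * y = box x y := fun _ _ => rfl
  have hone : (1 : V) = (0 : V) := rfl
  -- every element is a unit
  have hunit : ∀ a : V, IsUnit a := by
    intro a
    have hsurj : Function.Surjective (fun x => box x a) := by
      intro z
      refine ⟨(κ a).symm (z - a), ?_⟩
      simp [hκ]
    obtain ⟨b, hb⟩ := hsurj 0
    exact ⟨⟨a, b, by rw [hboxmul, hcomm]; exact hb, by rw [hboxmul]; exact hb⟩, rfl⟩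
  letI : Group V := groupOfIsUnit hunit
  letI : Fintype V := Fintype.ofFinite V
  obtain ⟨d, hd⟩ := VectorSpace.card_fintype (ZMod p) V
  rw [ZMod.card] at hd
  -- κ is multiplicative (in reversed order)
  have hpowκ : ∀ (x : V) (n : ℕ), κ (x ^ n) = (κ x) ^ n := by
    intro x n
    induction n with
    | zero => simpa [hone] using hκ0
    | succ n ih =>
      rw [pow_succ, hboxmul, hmul, ih]
      exact (pow_succ' _ _).symm
  -- every κ x has p-power order
  have hord : ∀ x : V, (κ x) ^ (p ^ d) = 1 := by
    intro x
    rw [← hpowκ, ← hd, pow_card_eq_one, hone, hκ0]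
  refine ⟨hmul, ?_, fun x => ⟨d, hord x⟩, ?_⟩
  · -- the subgroup
    refine ⟨{ carrier := Set.range κ
              one_mem' := ⟨0, hκ0⟩
              mul_mem' := ?_
              inv_mem' := ?_ }, rfl⟩
    · rintro a b ⟨u, rfl⟩ ⟨v, rfl⟩
      exact ⟨box v u, hmul v u⟩
    · rintro a ⟨u, rfl⟩
      refine ⟨u ^ (p ^ d - 1), ?_⟩
      rw [hpowκ]
      have hp1 : 1 ≤ p ^ d := Nat.one_le_pow _ _ (Fact.out (p := p.Prime)).pos
      apply eq_inv_of_mul_eq_one_left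
      rw [← pow_succ, Nat.sub_add_cancel hp1]
      exact hord u
  · -- unipotent
    intro x
    rcases subsingleton_or_nontrivial V with hV | hV
    · exact ⟨1, by apply LinearMap.ext; intro v; exact Subsingleton.elim _ _⟩
    · haveI : CharP (Module.End (ZMod p) V) p :=
        charP_of_injective_algebraMap
          (algebraMap (ZMod p) (Module.End (ZMod p) V)).injective p
      refine ⟨p ^ d, ?_⟩
      have hc : Commute ((κ x : V →ₗ[ZMod p] V)) (LinearMap.id (R := ZMod p) (M := V)) :=
        Commute.one_right _
      calc ((κ x : V →ₗ[ZMod p] V) - LinearMap.id) ^ p ^ d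
          = (κ x : V →ₗ[ZMod p] V) ^ p ^ d - LinearMap.id ^ p ^ d :=
            sub_pow_char_pow_of_commute p d hc
        _ = 0 := by
            have : ((κ x) ^ (p ^ d) : V ≃ₗ[ZMod p] V) = 1 := hord x
            have hcoe : ∀ m : ℕ, (((κ x) ^ m : V ≃ₗ[ZMod p] V) : V →ₗ[ZMod p] V)
                = ((κ x : V →ₗ[ZMod p] V)) ^ m := by
              intro m
              induction m with
              | zero => rfl
              | succ m ih => rw [pow_succ, pow_succ, ← ih]; rfl
            rw [← hcoe, this]
            rw [show ((1 : V ≃ₗ[ZMod p] V) : V →ₗ[ZMod p] V) = LinearMap.id from rfl,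
              show (LinearMap.id : V →ₗ[ZMod p] V) = 1 from rfl, one_pow, sub_self]
end

section
/- With hypotheses as above, the set U = {y ∈ V : x □ y = x ∘ y for all x ∈ V} is nonzero (contains a nonzero element), and U is a subgroup of both (V, ∘) and (V, □). -/
/-- Type synonym carrying the `box` group structure. -/
def Wrap (V : Type*) : Type _ := V

/-- With hypotheses as in the previous statements, the set
`U = {y ∈ V : x □ y = x ∘ y for all x ∈ V}` contains a nonzero element, and `U` is a
subgroup of both `(V, ∘)` and `(V, □)`. -/
theorem U_nonzero_and_subgroup
    (p : ℕ) [Fact p.Prime]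
    (V : Type*) [AddCommGroup V] [Module (ZMod p) V] [Finite V] [Nontrivial V]
    (box : V → V → V)
    (hcomm : ∀ x y : V, box x y = box y x)
    (hassoc : ∀ x y z : V, box (box x y) z = box x (box y z))
    (hzero : ∀ x : V, box x 0 = x)
    (κ : V → V ≃ₗ[ZMod p] V)
    (hκ : ∀ x y : V, box x y = κ y x + y) :
    -- U contains a nonzero element
    (∃ y : V, y ≠ 0 ∧ y ∈ {y : V | ∀ x : V, box x y = x + y}) ∧
    -- U is a subgroup of (V, ∘)
    (∃ H : AddSubgroup V, (H : Set V) = {y : V | ∀ x : V, box x y = x + y}) ∧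
    -- U is a subgroup of (V, □)
    ((0 : V) ∈ {y : V | ∀ x : V, box x y = x + y} ∧
      (∀ u ∈ {y : V | ∀ x : V, box x y = x + y},
        ∀ v ∈ {y : V | ∀ x : V, box x y = x + y},
          box u v ∈ {y : V | ∀ x : V, box x y = x + y}) ∧
      (∀ u ∈ {y : V | ∀ x : V, box x y = x + y},
        ∃ v ∈ {y : V | ∀ x : V, box x y = x + y}, box u v = 0)) := by
  classical
  -- κ 0 is the identity
  have hk0 : ∀ x : V, κ (0 : V) x = x := by
    intro x
    have h := hzero x
    rw [hκ x 0, add_zero] at h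
    exact h
  -- composition law : κ z ∘ κ y = κ (box y z)
  have hkcomp : ∀ y z x : V, κ z (κ y x) = κ (box y z) x := by
    intro y z x
    have h0 := hassoc x y z
    rw [hκ x y, hκ (κ y x + y) z, map_add, hκ x (box y z)] at h0
    -- h0 : κ z (κ y x) + κ z y + z = κ (box y z) x + box y z
    rw [hκ y z, add_assoc] at h0
    -- also rewrite the goal's box y z
    rw [hκ y z]
    exact add_right_cancel h0
  -- membership in U, κ-version (fixed for all κ x)
  have hfix : ∀ x y : V, box x y = x + y ↔ κ x y = y := by
    intro x y
    rw [hcomm, hκ y x, add_comm x y, add_left_inj]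
  -- membership in U, other κ-version (κ y = id)
  have hUκ : ∀ y : V, (∀ x : V, box x y = x + y) ↔ (∀ x : V, κ y x = x) := by
    intro y
    constructor
    · intro h x; have := h x; rw [hκ x y, add_left_inj] at this; exact this
    · intro h x; rw [hκ x y, h x]
  -- box-inverses exist
  have hinv : ∀ g : V, ∃ w : V, box g w = 0 := by
    intro g
    have hb : Function.Bijective (fun w : V => box g w) := by
      have he : (fun w : V => box g w) = fun w : V => (κ g) w + g := by
        funext w; rw [hcomm, hκ w g]
      rw [he]
      exact ((κ g).toEquiv.trans (Equiv.addRight g)).bijective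
    obtain ⟨w, hw⟩ := hb.surjective 0
    exact ⟨w, hw⟩
  -- zero is in U
  have hzeroU : (0 : V) ∈ {y : V | ∀ x : V, box x y = x + y} := by
    intro x; rw [hzero, add_zero]
  -- U is closed under +
  have haddU : ∀ a ∈ {y : V | ∀ x : V, box x y = x + y},
      ∀ b ∈ {y : V | ∀ x : V, box x y = x + y},
        a + b ∈ {y : V | ∀ x : V, box x y = x + y} := by
    intro a ha b hb
    have hka := (hUκ a).mp ha
    have hkb := (hUκ b).mp hb
    have hab : box a b = a + b := hb a
    refine (hUκ (a + b)).mpr fun x => ?_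
    calc κ (a + b) x = κ (box a b) x := by rw [hab]
      _ = κ b (κ a x) := (hkcomp a b x).symm
      _ = x := by rw [hka x, hkb x]
  -- box-inverse of an element of U lies in U and equals its negative
  have hnegU : ∀ a ∈ {y : V | ∀ x : V, box x y = x + y},
      ∃ w ∈ {y : V | ∀ x : V, box x y = x + y}, box a w = 0 ∧ w = -a := by
    intro a ha
    obtain ⟨w, hw⟩ := hinv a
    have hka := (hUκ a).mp ha
    have hkw : ∀ x : V, κ w x = x := by
      intro x
      have h := hkcomp a w x
      rw [hw, hk0, hka x] at h
      exact h
    have hwU : w ∈ {y : V | ∀ x : V, box x y = x + y} := (hUκ w).mpr hkw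
    have hwa : w = -a := by
      have h := hw
      rw [hκ a w, hkw a] at h
      exact eq_neg_of_add_eq_zero_right h
    exact ⟨w, hwU, hw, hwa⟩
  -- the group structure (Wrap V, box)
  letI instG : CommGroup (Wrap V) :=
    { mul := fun a b => box a b
      one := (0 : V)
      inv := fun a => Classical.choose (hinv a)
      mul_assoc := hassoc
      one_mul := fun a => by
        show box 0 a = a
        exact (hcomm 0 a).trans (hzero a)
      mul_one := hzero
      inv_mul_cancel := fun a => by
        show box (Classical.choose (hinv a)) a = 0
        exact (hcomm _ a).trans (Classical.choose_spec (hinv a))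
      mul_comm := hcomm }
  letI instA : MulAction (Wrap V) V :=
    { smul := fun g x => κ g x
      one_smul := fun x => hk0 x
      mul_smul := fun g h x => by
        show κ (box g h) x = κ g (κ h x)
        rw [hcomm g h]
        exact (hkcomp h g x).symm }
  letI : Finite (Wrap V) := ‹Finite V›
  letI : Fintype V := Fintype.ofFinite V
  letI : Fintype (Wrap V) := (inferInstance : Fintype V)
  -- cardinality is a power of p
  have hcardV : Nat.card V = p ^ Module.finrank (ZMod p) V := by
    rw [Nat.card_eq_fintype_card, Module.card_eq_pow_finrank (K := ZMod p) (V := V), ZMod.card]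
  have hP : IsPGroup p (Wrap V) :=
    IsPGroup.of_card (n := Module.finrank (ZMod p) V) hcardV
  have hdvd : p ∣ Nat.card V := by
    rw [hcardV]
    exact dvd_pow_self p (Module.finrank_pos (R := ZMod p) (M := V)).ne'
  -- 0 is a fixed point of the action
  have h0fix : (0 : V) ∈ MulAction.fixedPoints (Wrap V) V := by
    intro g
    show κ g 0 = 0
    exact map_zero (κ g)
  obtain ⟨b, hbfix, hb0⟩ :=
    hP.exists_fixed_point_of_prime_dvd_card_of_fixed_point (α := V) hdvd h0fix
  have hbU : b ∈ {y : V | ∀ x : V, box x y = x + y} := by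
    intro x
    exact (hfix x b).mpr (hbfix x)
  refine ⟨⟨b, fun h => hb0 h.symm, hbU⟩, ?_, hzeroU, ?_, ?_⟩
  · refine ⟨{ carrier := {y : V | ∀ x : V, box x y = x + y}
              zero_mem' := hzeroU
              add_mem' := fun ha hb => haddU _ ha _ hb
              neg_mem' := ?_ }, rfl⟩
    intro a ha
    obtain ⟨w, hwU, _, hwa⟩ := hnegU a ha
    rwa [hwa] at hwU
  · intro u hu v hv
    have h : box u v = u + v := hv u
    rw [h]
    exact haddU u hu v hv
  · intro u hu
    obtain ⟨w, hwU, hw, _⟩ := hnegU u hu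
    exact ⟨w, hwU, hw⟩
end

section
/- Let f: F_{2^m} → F_{2^m} be weakly-APN but not APN. Then there exists a nonzero a ∈ F_{2^m} such that Im(D_a f) = {f(x+a)+f(x) : x ∈ F_{2^m}} is not a coset of any F_2-linear subspace of F_{2^m}. -/
/-- The image of the derivative `D_a f` is a coset of an `F_2`-linear subspace. -/
def IsSubspaceCoset (m : ℕ) (A : Set (GaloisField 2 m)) : Prop :=
  ∃ (w : GaloisField 2 m) (W : Submodule (ZMod 2) (GaloisField 2 m)),
    A = (fun x => w + x) '' (W : Set (GaloisField 2 m))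

/-- Let `f : F_{2^m} → F_{2^m}` be weakly-APN (i.e. `|Im(D_a f)| > 2^{m-2}`
for all `a ≠ 0`) but not APN.  Then there exists a nonzero `a` such that
`Im(D_a f) = {f(x+a) + f(x) : x}` is not a coset of any `F_2`-linear subspace. -/
theorem exists_deriv_image_not_coset_of_weaklyAPN_not_APN
    (m : ℕ) (hm : 1 ≤ m) (f : GaloisField 2 m → GaloisField 2 m)
    -- weakly-APN: `|Im(D_a f)| > 2^{m-2}`, stated as `4·|Im(D_a f)| > 2^m`
    (hweak : ∀ a : GaloisField 2 m, a ≠ 0 →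
      2 ^ m < 4 * Nat.card (Set.range fun x => f (x + a) + f x))
    -- not APN
    (hnotAPN : ¬ ∀ a : GaloisField 2 m, a ≠ 0 → ∀ b : GaloisField 2 m,
      Nat.card {x : GaloisField 2 m | f (x + a) + f x = b} ≤ 2) :
    ∃ a : GaloisField 2 m, a ≠ 0 ∧
      ¬ IsSubspaceCoset m (Set.range fun x => f (x + a) + f x) := by
  classical
  haveI : Fintype (GaloisField 2 m) := Fintype.ofFinite _
  push_neg at hnotAPN
  obtain ⟨a, ha, b₀, hb₀⟩ := hnotAPN
  refine ⟨a, ha, ?_⟩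
  rintro ⟨w, W, hW⟩
  set g : GaloisField 2 m → GaloisField 2 m := fun x => f (x + a) + f x with hg
  have hcardF : Fintype.card (GaloisField 2 m) = 2 ^ m := by
    rw [← Nat.card_eq_fintype_card]; exact GaloisField.card 2 m (by omega)
  -- the derivative is "paired": g (x + a) = g x
  have hpair : ∀ x, g (x + a) = g x := by
    intro x
    have : x + a + a = x := by
      rw [add_assoc, CharTwo.add_self_eq_zero, add_zero]
    simp only [hg, this, add_comm (f x)]
  -- fibers as finsets
  set s : Finset (GaloisField 2 m) := Finset.univ.image g with hs
  have hfib : ∀ b : GaloisField 2 m,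
      Nat.card {x : GaloisField 2 m | g x = b}
        = (Finset.univ.filter fun x => g x = b).card := by
    intro b
    rw [Nat.card_eq_fintype_card]
    exact Fintype.card_subtype _
  -- every fiber over the image has at least 2 elements
  have hfib2 : ∀ b ∈ s, 2 ≤ (Finset.univ.filter fun x => g x = b).card := by
    intro b hb
    rw [Finset.mem_image] at hb
    obtain ⟨x, -, hx⟩ := hb
    have h1 : x ∈ Finset.univ.filter fun y => g y = b := by
      simp [hx]
    have h2 : x + a ∈ Finset.univ.filter fun y => g y = b := by
      simp [hpair, hx]
    have hne : x ≠ x + a := by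
      intro h
      apply ha
      have := h.symm
      rwa [add_eq_left] at this
    exact Finset.one_lt_card.mpr ⟨x, h1, x + a, h2, hne⟩
  -- the special fiber has ≥ 3 elements
  have hb₀' : 3 ≤ (Finset.univ.filter fun x => g x = b₀).card := by
    have hb₀g : 2 < Nat.card {x : GaloisField 2 m | g x = b₀} := hb₀
    have := hfib b₀
    omega
  have hb₀mem : b₀ ∈ s := by
    have h3 : 0 < (Finset.univ.filter fun x => g x = b₀).card := by omega
    obtain ⟨x, hx⟩ := Finset.card_pos.mp h3
    simp only [Finset.mem_filter] at hx
    exact Finset.mem_image.mpr ⟨x, Finset.mem_univ x, hx.2⟩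
  -- counting: 2 * |Im| + 1 ≤ 2^m
  have hsum : (Finset.univ : Finset (GaloisField 2 m)).card
      = ∑ b ∈ s, (Finset.univ.filter fun x => g x = b).card :=
    Finset.card_eq_sum_card_image g Finset.univ
  have hcount : 2 * s.card + 1 ≤ 2 ^ m := by
    have h1 : ∑ b ∈ s, (Finset.univ.filter fun x => g x = b).card
        = (Finset.univ.filter fun x => g x = b₀).card
          + ∑ b ∈ s.erase b₀, (Finset.univ.filter fun x => g x = b).card :=
      (Finset.add_sum_erase _ _ hb₀mem).symm
    have h2 := Finset.card_nsmul_le_sum (s.erase b₀)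
      (fun b => (Finset.univ.filter fun x => g x = b).card) 2
      (fun b hb => hfib2 b (Finset.mem_of_mem_erase hb))
    simp only [smul_eq_mul] at h2
    have h3 : (s.erase b₀).card = s.card - 1 := Finset.card_erase_of_mem hb₀mem
    have h4 : 1 ≤ s.card := Finset.card_pos.mpr ⟨b₀, hb₀mem⟩
    have h5 := Finset.card_univ (α := GaloisField 2 m)
    omega
  -- |Im| as Nat.card of the range
  have hrange : Nat.card (Set.range g) = s.card := by
    have : Set.range g = ↑s := by
      simp [hs, Finset.coe_image, Set.image_univ]
    rw [Nat.card_coe_set_eq, this, Set.ncard_coe_finset]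
  -- the coset has cardinality 2^k
  have hWcard : Nat.card (Set.range g) = 2 ^ (Module.finrank (ZMod 2) W) := by
    rw [hW]
    rw [Nat.card_coe_set_eq,
      Set.ncard_image_of_injective _ (add_right_injective w),
      ← Nat.card_coe_set_eq]
    haveI : Fintype W := Fintype.ofFinite _
    have hWW : Nat.card (W : Set (GaloisField 2 m)) = Nat.card W := by
      simp [Nat.card_eq_fintype_card]
    rw [hWW, Nat.card_eq_fintype_card, Module.card_eq_pow_finrank (K := ZMod 2) (V := W), ZMod.card]
  have hweak' := hweak a ha
  set k := Module.finrank (ZMod 2) W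
  rw [hWcard] at hweak'
  rw [hWcard] at hrange
  -- now: 2^m < 4 * 2^k  and  2 * 2^k + 1 ≤ 2^m
  have hlt : 2 ^ m < 2 ^ (k + 2) := by
    calc 2 ^ m < 4 * 2 ^ k := hweak'
    _ = 2 ^ (k + 2) := by ring
  have hgt : 2 ^ (k + 1) < 2 ^ m := by
    calc 2 ^ (k + 1) = 2 * 2 ^ k := by ring
    _ < 2 ^ m := by omega
  have h1 : m < k + 2 := (Nat.pow_lt_pow_iff_right (by norm_num)).mp hlt
  have h2 : k + 1 < m := (Nat.pow_lt_pow_iff_right (by norm_num)).mp hgt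
  omega
end

section
/- Let f(x) = x^d be a permutation of F_{2^m} that is weakly-APN but not APN. Then f is anti-crooked, i.e., for every nonzero a ∈ F_{2^m}, Im(D_a f) is not a coset of any F_2-subspace of F_{2^m}. -/
/-- Let `f(x) = x^d` be a permutation of `F_{2^m}` that is weakly-APN but not
APN.  Then `f` is anti-crooked: for every nonzero `a`, `Im(D_a f)` is not a coset of any
`F_2`-subspace of `F_{2^m}`. -/
theorem power_weaklyAPN_not_APN_is_antiCrooked
    (m d : ℕ) (hm : 1 ≤ m)
    (hperm : Function.Bijective (fun x : GaloisField 2 m => x ^ d))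
    -- weakly-APN: `|Im(D_a f)| > 2^{m-2}`, stated as `4·|Im(D_a f)| > 2^m`
    (hweak : ∀ a : GaloisField 2 m, a ≠ 0 →
      2 ^ m < 4 * Nat.card (Set.range fun x => (x + a) ^ d + x ^ d))
    -- not APN
    (hnotAPN : ¬ ∀ a : GaloisField 2 m, a ≠ 0 → ∀ b : GaloisField 2 m,
      Nat.card {x : GaloisField 2 m | (x + a) ^ d + x ^ d = b} ≤ 2) :
    ∀ a : GaloisField 2 m, a ≠ 0 →
      ¬ IsSubspaceCoset m (Set.range fun x => (x + a) ^ d + x ^ d) := by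
  classical
  haveI : Fintype (GaloisField 2 m) := Fintype.ofFinite _
  intro a ha
  rintro ⟨w, W, hW⟩
  set g : GaloisField 2 m → GaloisField 2 m := fun x => (x + a) ^ d + x ^ d with hg
  have hchar : ∀ z : GaloisField 2 m, z + z = 0 := CharTwo.add_self_eq_zero
  have hper : ∀ x : GaloisField 2 m, g (x + a) = g x := by
    intro x
    simp only [hg, add_assoc, hchar a, add_zero]
    exact add_comm _ _
  have hcardF : Fintype.card (GaloisField 2 m) = 2 ^ m := by
    rw [← Nat.card_eq_fintype_card]
    exact GaloisField.card 2 m (by omega)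
  -- the image as a Finset
  set I : Finset (GaloisField 2 m) := Finset.image g Finset.univ with hI
  have hrange : Set.range g = ↑I := by
    rw [hI, Finset.coe_image, Finset.coe_univ, Set.image_univ]
  have hNI : Nat.card (Set.range g) = I.card := by
    rw [hrange, Nat.card_coe_set_eq, Set.ncard_coe_finset]
  -- |range g| = |W| = 2 ^ k
  have hWcard : Nat.card (Set.range g) = Nat.card W := by
    rw [hW, Nat.card_image_of_injective (add_right_injective w)]
    rfl
  obtain ⟨k, hk⟩ : ∃ k, Nat.card W = 2 ^ k := by
    refine ⟨Module.finrank (ZMod 2) W, ?_⟩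
    rw [Nat.card_eq_fintype_card]
    have := Module.card_eq_pow_finrank (K := ZMod 2) (V := W)
    rwa [ZMod.card] at this
  -- fiber counting
  have hsum : ∑ b ∈ I, (Finset.univ.filter fun x => g x = b).card = 2 ^ m := by
    rw [← Finset.card_eq_sum_card_fiberwise
      (fun x _ => Finset.mem_image_of_mem g (Finset.mem_univ x)),
      Finset.card_univ, hcardF]
  have hfiber2 : ∀ b ∈ I, 2 ≤ (Finset.univ.filter fun x => g x = b).card := by
    intro b hb
    obtain ⟨x, -, hx⟩ := Finset.mem_image.mp hb
    have hxa : x + a ≠ x := by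
      intro h
      exact ha (add_eq_left.mp h)
    refine Finset.one_lt_card.mpr ⟨x + a, ?_, x, ?_, hxa⟩ <;>
      simp [hper, hx]
  have hle : 2 * I.card ≤ 2 ^ m := by
    calc 2 * I.card = ∑ _b ∈ I, 2 := by rw [Finset.sum_const, smul_eq_mul, mul_comm]
    _ ≤ ∑ b ∈ I, (Finset.univ.filter fun x => g x = b).card := Finset.sum_le_sum hfiber2
    _ = 2 ^ m := hsum
  -- squeeze: I.card = 2^(m-1)
  have hIcard : 2 * I.card = 2 ^ m := by
    have h1 : I.card = 2 ^ k := by rw [← hNI, hWcard, hk]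
    have hlt := hweak a ha
    rw [hNI, h1] at hlt
    rw [h1] at hle ⊢
    have hkm : k + 1 ≤ m := by
      have : 2 ^ (k + 1) ≤ 2 ^ m := by rw [pow_succ, mul_comm]; exact hle
      exact (Nat.pow_le_pow_iff_right (by norm_num)).mp this
    have hmk : m < k + 2 := by
      have : 2 ^ m < 2 ^ (k + 2) := by
        calc 2 ^ m < 4 * 2 ^ k := hlt
        _ = 2 ^ (k + 2) := by ring
      exact (Nat.pow_lt_pow_iff_right (by norm_num)).mp this
    have : m = k + 1 := by omega
    rw [this, pow_succ, mul_comm]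
  -- all fibers of g have card ≤ 2
  have hall : ∀ b : GaloisField 2 m, (Finset.univ.filter fun x => g x = b).card ≤ 2 := by
    intro b
    by_contra hbig
    push_neg at hbig
    have hbI : b ∈ I := by
      have hne : (Finset.univ.filter fun x => g x = b).Nonempty :=
        Finset.card_pos.mp (by omega)
      obtain ⟨x, hx⟩ := hne
      simp only [Finset.mem_filter] at hx
      exact hx.2 ▸ Finset.mem_image_of_mem g (Finset.mem_univ x)
    have hlt : ∑ _b ∈ I, 2 < ∑ b ∈ I, (Finset.univ.filter fun x => g x = b).card :=
      Finset.sum_lt_sum hfiber2 ⟨b, hbI, hbig⟩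
    rw [Finset.sum_const, smul_eq_mul, mul_comm, hsum] at hlt
    omega
  -- now derive a bad fiber for `a` from hnotAPN
  push_neg at hnotAPN
  obtain ⟨a0, ha0, b0, h3⟩ := hnotAPN
  set g0 : GaloisField 2 m → GaloisField 2 m := fun x => (x + a0) ^ d + x ^ d with hg0
  have h3' : 2 < (Finset.univ.filter fun x => g0 x = b0).card := by
    have heq : Nat.card {x : GaloisField 2 m | g0 x = b0} =
        (Finset.univ.filter fun x => g0 x = b0).card := by
      rw [Nat.card_eq_fintype_card, ← Set.toFinset_card, Set.toFinset_setOf]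
    rw [← heq]
    exact h3
  set c : GaloisField 2 m := a * a0⁻¹ with hc
  have hcne : c ≠ 0 := mul_ne_zero ha (inv_ne_zero ha0)
  have hca : c * a0 = a := by rw [hc, mul_assoc, inv_mul_cancel₀ ha0, mul_one]
  have hmap : ∀ x : GaloisField 2 m, g0 x = b0 → g (c * x) = c ^ d * b0 := by
    intro x hx
    have h1 : c * x + a = c * (x + a0) := by rw [mul_add, hca]
    simp only [hg, h1, mul_pow]
    rw [← mul_add]
    exact congrArg (fun z => c ^ d * z) hx
  have hinj : (Finset.univ.filter fun x => g0 x = b0).card ≤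
      (Finset.univ.filter fun y => g y = c ^ d * b0).card := by
    apply Finset.card_le_card_of_injOn (fun x => c * x)
    · intro x hx
      simp only [Finset.mem_coe, Finset.mem_filter, Finset.mem_univ, true_and] at hx ⊢
      exact hmap x hx
    · intro x _ y _ h
      exact mul_left_cancel₀ hcne h
  have hfin := hall (c ^ d * b0)
  omega
end
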